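/- Let G be a bipanpositionable graph with at least 4 vertices. Then every vertex of G lies on a 4-cycle of G. -/

import Mathlib

/-- A Hamiltonian bipartite graph `G` is *bipanpositionable* if for any two distinct
vertices `x, y` and any `k` with `dist(x,y) ≤ k ≤ |V(G)|/2` and `k - dist(x,y)` even,
some Hamiltonian cycle `C` of `G` has `dist_C(x,y) = k`; here such a Hamiltonian cycle
is encoded by its two arcs between `x` and `y`: internally disjoint paths of lengths
`k` and `|V(G)| - k` which together cover all vertices. -/
def Bipanpositionable {V : Type*} [Fintype V] [DecidableEq V] (G : SimpleGraph V) : Prop :=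
  G.Colorable 2 ∧ (∃ (a : V) (C : G.Walk a a), C.IsHamiltonianCycle) ∧
  ∀ x y : V, x ≠ y → ∀ k : ℕ, G.dist x y ≤ k → 2 * k ≤ Fintype.card V →
    Even (k - G.dist x y) →
    ∃ p q : G.Walk x y, p.IsPath ∧ q.IsPath ∧
      p.length = k ∧ q.length = Fintype.card V - k ∧
      (∀ v : V, v ∈ p.support ∨ v ∈ q.support) ∧
      (∀ v : V, v ∈ p.support → v ∈ q.support → v = x ∨ v = y)

open SimpleGraph

/-- In a path of length 3 from `x` to `y`, the edge `s(x,y)` does not occur. -/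
lemma edge_not_mem_edges_of_path_len3 {V : Type*} {G : SimpleGraph V} {x y : V}
    (p : G.Walk x y) (hp : p.IsPath) (h3 : p.length = 3) : s(x, y) ∉ p.edges := by
  cases p with
  | nil => simp at h3
  | cons h q =>
    cases q with
    | nil => simp at h3
    | cons h' r =>
      cases r with
      | nil => simp at h3
      | cons h'' s =>
        cases s with
        | cons h''' t => simp [SimpleGraph.Walk.length_cons] at h3
        | nil =>
          intro hmem
          have hnd := hp.support_nodup
          simp [SimpleGraph.Walk.support_cons, List.nodup_cons] at hnd
          simp [SimpleGraph.Walk.edges_cons, Sym2.eq_iff] at hmem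
          obtain ⟨⟨hxb, hxc, hxy⟩, ⟨hbc, hby⟩, hcy⟩ := hnd
          rcases hmem with (⟨_, h1⟩ | ⟨h1, _⟩) | (⟨h1,h2⟩|⟨h1,h2⟩) | (⟨h1,h2⟩|⟨h1,h2⟩) <;>
            simp_all

/-- An edge `ab` together with a path of length 3 from `a` to `b` yields a 4-cycle at `a`. -/
lemma cycle4_of_path3 {V : Type*} {G : SimpleGraph V} {a b : V} (hab : G.Adj a b)
    (p : G.Walk a b) (hp : p.IsPath) (h3 : p.length = 3) :
    ∃ C : G.Walk a a, C.IsCycle ∧ C.length = 4 := by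
  refine ⟨SimpleGraph.Walk.cons hab p.reverse, ?_, by simp [h3]⟩
  rw [SimpleGraph.Walk.cons_isCycle_iff]
  refine ⟨hp.reverse, ?_⟩
  rw [SimpleGraph.Walk.edges_reverse, List.mem_reverse]
  exact edge_not_mem_edges_of_path_len3 p hp h3

theorem bipanpositionable_four_cycle {V : Type*} [Fintype V] [DecidableEq V]
    (G : SimpleGraph V) (hG : Bipanpositionable G) (h4 : 4 ≤ Fintype.card V) (a : V) :
    ∃ C : G.Walk a a, C.IsCycle ∧ C.length = 4 := by
  obtain ⟨hcol, ⟨c0, C, hC⟩, hpan⟩ := hG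
  -- the number of vertices is even, since `G` is bipartite with a Hamiltonian cycle
  have hcard : Even (Fintype.card V) := by
    have cb : G.Coloring Bool := G.recolorOfEquiv finTwoEquiv hcol.some
    have := (cb.even_length_iff_congr C).mpr Iff.rfl
    rwa [hC.length_eq] at this
  -- find a neighbor `b` of `a` on the Hamiltonian cycle
  have ha : a ∈ C.support := hC.mem_support a
  have hcyc := hC.isCycle.rotate ha
  have hnil : ¬ (C.rotate a ha).Nil := by
    rw [SimpleGraph.Walk.not_nil_iff_lt_length]
    have := hcyc.three_le_length
    omega
  set b := (C.rotate a ha).getVert 1 with hb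
  have hab : G.Adj a b := (C.rotate a ha).adj_snd hnil
  have hdist : G.dist a b = 1 := SimpleGraph.dist_eq_one_iff_adj.mpr hab
  rcases Nat.lt_or_ge (Fintype.card V) 6 with h6 | h6
  · -- card = 4: use k = 1 and take the long arc `q`, of length 3
    have hc4 : Fintype.card V = 4 := by
      rcases hcard with ⟨m, hm⟩; omega
    obtain ⟨p, q, hp, hq, hpl, hql, -, -⟩ :=
      hpan a b hab.ne 1 (by omega) (by omega) (by rw [hdist]; simp)
    exact cycle4_of_path3 hab q hq (by omega)
  · -- card ≥ 6: use k = 3, the short arc `p` has length 3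
    obtain ⟨p, q, hp, hq, hpl, hql, -, -⟩ :=
      hpan a b hab.ne 3 (by omega) (by omega) (by rw [hdist]; decide)
    exact cycle4_of_path3 hab p hp hpl
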